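/- Let H be a finite dimensional complex vector space with finite decreasing filtration F and a (-1)^m-symmetric bilinear pairing S such that S(F^p H, F^q H) = 0 for p + q = m + 1 and the induced pairings Gr_F^p H × Gr_F^{m-p} H → ℂ are nondegenerate. Then there exist elements v_{p,i} ∈ F^p H (for each p and 1 ≤ i ≤ dim Gr_F^p H) whose classes form bases of the graded pieces Gr_F^p H, satisfying S(v_{p,i}, v_{q,j}) = ε_p δ_{p,m-q} δ_{i,j} with signs ε_p ∈ {±1}. -/

import Mathlib

open Module

section helpers

variable (H : Type) [AddCommGroup H] [Module ℂ H]
  (F : ℤ → Submodule ℂ H) (m : ℤ) (S : H →ₗ[ℂ] H →ₗ[ℂ] ℂ)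

/-- Restriction of the nondegeneracy hypotheses to an orthogonal complement `H'`. -/
theorem stmt2_restrict
    (hndl : ∀ p : ℤ, ∀ u ∈ F p, (∀ v ∈ F (m - p), S u v = 0) → u ∈ F (p + 1))
    (hndr : ∀ p : ℤ, ∀ v ∈ F (m - p), (∀ u ∈ F p, S u v = 0) → v ∈ F (m - p + 1))
    (H' : Submodule ℂ H)
    (hdec : ∀ p : ℤ, ∀ y ∈ F p, ∃ z ∈ F p ⊓ H', ∀ x ∈ H', S x (y - z) = 0 ∧ S (y - z) x = 0) :
    (∀ p : ℤ, ∀ u' ∈ (F p).comap H'.subtype,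
      (∀ v' ∈ (F (m - p)).comap H'.subtype, S u' v' = 0) → u' ∈ (F (p + 1)).comap H'.subtype) ∧
    (∀ p : ℤ, ∀ v' ∈ (F (m - p)).comap H'.subtype,
      (∀ u' ∈ (F p).comap H'.subtype, S u' v' = 0) → v' ∈ (F (m - p + 1)).comap H'.subtype) := by
  constructor
  · intro p u' hu' hkill
    refine Submodule.mem_comap.mpr (hndl p _ hu' fun y hy => ?_)
    obtain ⟨z, hz, hperp⟩ := hdec (m - p) y hy
    have h1 : S (u' : H) (y - z) = 0 := (hperp _ u'.2).1
    have h2 : S (u' : H) z = 0 := hkill ⟨z, hz.2⟩ hz.1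
    show S (u' : H) y = 0
    have h3 : S (u' : H) y = S (u' : H) z + S (u' : H) (y - z) := by rw [map_sub]; ring
    rw [h3, h1, h2, add_zero]
  · intro p v' hv' hkill
    refine Submodule.mem_comap.mpr (hndr p _ hv' fun y hy => ?_)
    obtain ⟨z, hz, hperp⟩ := hdec p y hy
    have h1 : S (y - z) (v' : H) = 0 := (hperp _ v'.2).2
    have h2 : S z (v' : H) = 0 := hkill ⟨z, hz.2⟩ hz.1
    show S y (v' : H) = 0
    have h3 : S y (v' : H) = S z (v' : H) + S (y - z) (v' : H) := by
      rw [map_sub, LinearMap.sub_apply]; ring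
    rw [h3, h1, h2, add_zero]

/-- Derive the perp-style decomposition from the coefficient-style one. -/
theorem stmt2_perpdec
    (H' : Submodule ℂ H)
    (ι₀ : Type) [Fintype ι₀] (g : ι₀ → H) (dg : ι₀ → ℤ)
    (hgperp : ∀ i, ∀ x ∈ H', S (g i) x = 0 ∧ S x (g i) = 0)
    (hdec : ∀ p : ℤ, ∀ y ∈ F p, ∃ c : ι₀ → ℂ,
      y - ∑ i, c i • g i ∈ F p ⊓ H' ∧ ∀ i, c i = 0 ∨ p ≤ dg i) :
    ∀ p : ℤ, ∀ y ∈ F p, ∃ z ∈ F p ⊓ H', ∀ x ∈ H', S x (y - z) = 0 ∧ S (y - z) x = 0 := by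
  intro p y hy
  obtain ⟨c, hz, -⟩ := hdec p y hy
  refine ⟨_, hz, fun x hx => ⟨?_, ?_⟩⟩
  · have h : y - (y - ∑ i, c i • g i) = ∑ i, c i • g i := by abel
    rw [h, map_sum]
    exact Finset.sum_eq_zero fun i _ => by
      rw [map_smul, smul_eq_mul, (hgperp i x hx).2, mul_zero]
  · have h : y - (y - ∑ i, c i • g i) = ∑ i, c i • g i := by abel
    rw [h]
    have : S (∑ i, c i • g i) x = ∑ i, c i * S (g i) x := by
      rw [map_sum, LinearMap.sum_apply]
      exact Finset.sum_congr rfl fun i _ => by rw [map_smul, LinearMap.smul_apply, smul_eq_mul]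
    rw [this]
    exact Finset.sum_eq_zero fun i _ => by rw [(hgperp i x hx).1, mul_zero]

/-- Extending an adapted family on the orthocomplement by finitely many new vectors. -/
theorem stmt2_extend
    (hF : ∀ p q : ℤ, p ≤ q → F q ≤ F p)
    (H' : Submodule ℂ H)
    (ι₀ : Type) [Fintype ι₀] (g : ι₀ → H) (dg : ι₀ → ℤ) (σ₀ : ι₀ ≃ ι₀)
    (hgF : ∀ i, g i ∈ F (dg i))
    (hdσ₀ : ∀ i, dg (σ₀ i) = m - dg i)
    (hσσ₀ : ∀ i, σ₀ (σ₀ i) = i)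
    (hmid₀ : ∀ i, 2 * dg i = m → σ₀ i = i)
    (hpair₀ : ∀ i, S (g i) (g (σ₀ i)) = if m ≤ 2 * dg i then 1 else (-1 : ℂ) ^ m)
    (hpair₀' : ∀ i j, σ₀ i ≠ j → S (g i) (g j) = 0)
    (hgperp : ∀ i, ∀ x ∈ H', S (g i) x = 0 ∧ S x (g i) = 0)
    (hdec : ∀ p : ℤ, ∀ y ∈ F p, ∃ c : ι₀ → ℂ,
      y - ∑ i, c i • g i ∈ F p ⊓ H' ∧ ∀ i, c i = 0 ∨ p ≤ dg i)
    (ι' : Type) (inst' : Fintype ι') (e' : ι' → ↥H') (d' : ι' → ℤ) (σ' : ι' ≃ ι')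
    (he'mem : ∀ i, (e' i : H) ∈ F (d' i))
    (he'span : ∀ p : ℤ, (F p).comap H'.subtype = Submodule.span ℂ (e' '' {i | p ≤ d' i}))
    (hdσ' : ∀ i, d' (σ' i) = m - d' i)
    (hσσ' : ∀ i, σ' (σ' i) = i)
    (hmid' : ∀ i, 2 * d' i = m → σ' i = i)
    (hp1' : ∀ i, S (e' i : H) (e' (σ' i) : H) = if m ≤ 2 * d' i then 1 else (-1 : ℂ) ^ m)
    (hp2' : ∀ i j, σ' i ≠ j → S (e' i : H) (e' j : H) = 0) :
    ∃ (ι : Type) (_ : Fintype ι) (e : ι → H) (d : ι → ℤ) (σ : ι ≃ ι),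
      (∀ i, e i ∈ F (d i)) ∧
      (∀ p : ℤ, F p = Submodule.span ℂ (e '' {i | p ≤ d i})) ∧
      (∀ i, d (σ i) = m - d i) ∧
      (∀ i, σ (σ i) = i) ∧
      (∀ i, 2 * d i = m → σ i = i) ∧
      (∀ i, S (e i) (e (σ i)) = (if m ≤ 2 * d i then 1 else (-1 : ℂ) ^ m)) ∧
      (∀ i j, σ i ≠ j → S (e i) (e j) = 0) := by
  classical
  refine ⟨ι' ⊕ ι₀, inferInstance, Sum.elim (fun i => (e' i : H)) g, Sum.elim d' dg,
    σ'.sumCongr σ₀, ?_, ?_, ?_, ?_, ?_, ?_, ?_⟩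
  · rintro (i | i)
    · exact he'mem i
    · exact hgF i
  · intro p
    apply le_antisymm
    · intro y hy
      obtain ⟨c, hz, hc⟩ := hdec p y hy
      have hzmem : y - ∑ i, c i • g i ∈
          Submodule.span ℂ ((Sum.elim (fun i => (e' i : H)) g) '' {i | p ≤ Sum.elim d' dg i}) := by
        have h1 : (⟨y - ∑ i, c i • g i, hz.2⟩ : ↥H') ∈ (F p).comap H'.subtype :=
          Submodule.mem_comap.mpr hz.1
        rw [he'span p] at h1
        have h2 := Submodule.mem_map_of_mem (f := H'.subtype) h1
        rw [Submodule.map_span] at h2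
        refine Submodule.span_mono ?_ h2
        rintro x ⟨-, ⟨i, hi, rfl⟩, rfl⟩
        exact ⟨Sum.inl i, hi, rfl⟩
      have hsum : (∑ i, c i • g i) ∈
          Submodule.span ℂ ((Sum.elim (fun i => (e' i : H)) g) '' {i | p ≤ Sum.elim d' dg i}) := by
        refine Submodule.sum_mem _ fun i _ => ?_
        rcases hc i with h | h
        · simp [h]
        · exact Submodule.smul_mem _ _ (Submodule.subset_span ⟨Sum.inr i, h, rfl⟩)
      have := Submodule.add_mem _ hzmem hsum
      simpa using this
    · rw [Submodule.span_le]
      rintro x ⟨i, hi, rfl⟩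
      rcases i with i | i
      · exact hF _ _ hi (he'mem i)
      · exact hF _ _ hi (hgF i)
  · rintro (i | i)
    · exact hdσ' i
    · exact hdσ₀ i
  · rintro (i | i)
    · simp [hσσ' i]
    · simp [hσσ₀ i]
  · rintro (i | i) h
    · simp at h
      simp [hmid' i h]
    · simp at h
      simp [hmid₀ i h]
  · rintro (i | i)
    · exact hp1' i
    · exact hpair₀ i
  · rintro (i | i) (j | j) hne
    · exact hp2' i j (fun h => hne (by simp [h]))
    · exact (hgperp j _ (e' i).2).2
    · exact (hgperp i _ (e' j).2).1
    · exact hpair₀' i j (fun h => hne (by simp [h]))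

end helpers

/-- Inductive core: an `S`-adapted basis indexed by an abstract finite type,
with a degree function `d` and a pairing involution `σ`. -/
theorem stmt2_aux : ∀ (N : ℕ) (H : Type) [AddCommGroup H] [Module ℂ H] [FiniteDimensional ℂ H],
    finrank ℂ H < N →
    ∀ (F : ℤ → Submodule ℂ H), (∀ p q : ℤ, p ≤ q → F q ≤ F p) →
    (∃ a : ℤ, F a = ⊤) → (∃ b : ℤ, F b = ⊥) →
    ∀ (m : ℤ) (S : H →ₗ[ℂ] H →ₗ[ℂ] ℂ),
    (∀ u v : H, S u v = (-1 : ℂ) ^ m * S v u) →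
    (∀ p q : ℤ, p + q = m + 1 → ∀ u ∈ F p, ∀ v ∈ F q, S u v = 0) →
    (∀ p : ℤ, ∀ u ∈ F p, (∀ v ∈ F (m - p), S u v = 0) → u ∈ F (p + 1)) →
    (∀ p : ℤ, ∀ v ∈ F (m - p), (∀ u ∈ F p, S u v = 0) → v ∈ F (m - p + 1)) →
    ∃ (ι : Type) (_ : Fintype ι) (e : ι → H) (d : ι → ℤ) (σ : ι ≃ ι),
      (∀ i, e i ∈ F (d i)) ∧
      (∀ p : ℤ, F p = Submodule.span ℂ (e '' {i | p ≤ d i})) ∧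
      (∀ i, d (σ i) = m - d i) ∧
      (∀ i, σ (σ i) = i) ∧
      (∀ i, 2 * d i = m → σ i = i) ∧
      (∀ i, S (e i) (e (σ i)) = (if m ≤ 2 * d i then 1 else (-1 : ℂ) ^ m)) ∧
      (∀ i j, σ i ≠ j → S (e i) (e j) = 0) := by
  intro N
  induction N with
  | zero => intro H _ _ _ hrank; omega
  | succ N ih =>
    intro H _ _ _ hrank F hF hexh hfin m S hsymm hvan hndl hndr
    rcases subsingleton_or_nontrivial H with hss | hnt
    · -- trivial module
      refine ⟨Empty, inferInstance, fun i => i.elim, fun i => i.elim, Equiv.refl _,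
        fun i => i.elim, fun p => ?_, fun i => i.elim, fun i => i.elim, fun i => i.elim,
        fun i => i.elim, fun i => i.elim⟩
      have : Subsingleton (Submodule ℂ H) := inferInstance
      exact Subsingleton.elim _ _
    · -- find the top nonzero level t
      obtain ⟨t, ht, htmax⟩ : ∃ t : ℤ, F t ≠ ⊥ ∧ ∀ p : ℤ, F p ≠ ⊥ → p ≤ t := by
        obtain ⟨a, ha⟩ := hexh
        obtain ⟨b, hb⟩ := hfin
        have := Int.exists_greatest_of_bdd (P := fun p => F p ≠ ⊥) ?_ ?_
        · rcases this with ⟨l, h1, h2⟩; exact ⟨l, h1, h2⟩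
        · refine ⟨b, fun z hz => ?_⟩
          by_contra hc
          exact hz (le_bot_iff.mp (hb ▸ hF b z (by omega)))
        · refine ⟨a, fun h => ?_⟩
          obtain ⟨x, hx⟩ := exists_ne (0 : H)
          have : x ∈ F a := ha ▸ Submodule.mem_top
          rw [h] at this
          exact hx this
      have hFtop : ∀ p : ℤ, t < p → F p = ⊥ := fun p hp => by
        by_contra h; exact absurd (htmax p h) (by omega)
      obtain ⟨u₀, hu₀F, hu₀⟩ := (Submodule.ne_bot_iff _).mp ht
      -- find a partner w with S u₀ w ≠ 0
      obtain ⟨w, hwF, hw⟩ : ∃ w ∈ F (m - t), S u₀ w ≠ 0 := by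
        by_contra hc
        push_neg at hc
        have := hndl t u₀ hu₀F (fun v hv => hc v hv)
        rw [hFtop (t + 1) (by omega)] at this
        exact hu₀ this
      have hwne : w ≠ 0 := fun h => hw (by simp [h])
      have hmt : m - t ≤ t := htmax _ (fun h => hwne (by rw [h] at hwF; simpa using hwF))
      -- sign facts
      have hsq : (-1 : ℂ) ^ m * (-1 : ℂ) ^ m = 1 := by
        rcases Int.even_or_odd m with he | ho
        · rw [he.neg_one_zpow]; ring
        · rw [ho.neg_one_zpow]; ring
      obtain ⟨a, ha⟩ := hexh
      obtain ⟨b, hb⟩ := hfin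
      rcases lt_or_eq_of_le hmt with hltm | heqm
      · -- case m - t < t : peel off a hyperbolic pair
        obtain ⟨u, huF, huw⟩ : ∃ u ∈ F t, S u w = 1 := by
          refine ⟨(S u₀ w)⁻¹ • u₀, Submodule.smul_mem _ _ hu₀F, ?_⟩
          rw [map_smul, LinearMap.smul_apply, smul_eq_mul, inv_mul_cancel₀ hw]
        have huu : S u u = 0 :=
          hvan t (m + 1 - t) (by ring) u huF u (hF (m + 1 - t) t (by omega) huF)
        have hwu : S w u = (-1 : ℂ) ^ m := by
          rw [hsymm w u, huw, mul_one]
        obtain ⟨w', hw'F, huw', hw'u, hw'w'⟩ :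
            ∃ w' ∈ F (m - t), S u w' = 1 ∧ S w' u = (-1 : ℂ) ^ m ∧ S w' w' = 0 := by
          refine ⟨w - (S w w / (1 + (-1 : ℂ) ^ m)) • u,
            Submodule.sub_mem _ hwF (Submodule.smul_mem _ _ (hF (m - t) t (by omega) huF)),
            ?_, ?_, ?_⟩
          · rw [map_sub, map_smul, smul_eq_mul, huw, huu, mul_zero, sub_zero]
          · have hexp : S (w - (S w w / (1 + (-1 : ℂ) ^ m)) • u) u
                = S w u - (S w w / (1 + (-1 : ℂ) ^ m)) * S u u := by
              simp only [map_sub, LinearMap.sub_apply, map_smul, LinearMap.smul_apply,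
                smul_eq_mul]
            rw [hexp, huu, hwu, mul_zero, sub_zero]
          · simp only [map_sub, LinearMap.sub_apply, map_smul, LinearMap.smul_apply,
              smul_eq_mul]
            rw [huu, huw, hwu]
            rcases Int.even_or_odd m with he | ho
            · rw [he.neg_one_zpow]
              norm_num
              ring
            · have h1 : (-1 : ℂ) ^ m = -1 := ho.neg_one_zpow
              have hww0 : S w w = 0 := by
                have h2 := hsymm w w
                rw [h1] at h2
                have h3 : (2 : ℂ) * S w w = 0 := by linear_combination h2
                exact (mul_eq_zero.mp h3).resolve_left (by norm_num)
              rw [h1, hww0]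
              ring
        let H' : Submodule ℂ H := LinearMap.ker (S u) ⊓ LinearMap.ker (S w')
        have hw'H' : w' ∉ H' := fun h => by
          have h1 : S u w' = 0 := h.1
          rw [huw'] at h1; exact one_ne_zero h1
        have hrk : finrank ℂ ↥H' < N := by
          have h1 : finrank ℂ ↥H' < finrank ℂ H :=
            Submodule.finrank_lt (fun (h : H' = ⊤) => hw'H' (h ▸ Submodule.mem_top))
          omega
        let g : Bool → H := fun i => if i then w' else u
        let dg : Bool → ℤ := fun i => if i then m - t else t
        have hgperp : ∀ i, ∀ y ∈ H', S (g i) y = 0 ∧ S y (g i) = 0 := by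
          rintro i y ⟨hy1, hy2⟩
          have h1 : S u y = 0 := hy1
          have h2 : S w' y = 0 := hy2
          cases i
          · refine ⟨h1, ?_⟩
            show S y u = 0
            rw [hsymm y u, h1, mul_zero]
          · refine ⟨h2, ?_⟩
            show S y w' = 0
            rw [hsymm y w', h2, mul_zero]
        have hdec : ∀ p : ℤ, ∀ y ∈ F p, ∃ cf : Bool → ℂ,
            y - ∑ i, cf i • g i ∈ F p ⊓ H' ∧ ∀ i, cf i = 0 ∨ p ≤ dg i := by
          intro p y hy
          by_cases hp1 : p ≤ m - t
          · refine ⟨fun i => if i then S u y else (-1 : ℂ) ^ m * S w' y, ?_, ?_⟩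
            · have hsum : ∑ i : Bool, (fun i => if i then S u y else (-1 : ℂ) ^ m * S w' y) i • g i
                  = S u y • w' + ((-1 : ℂ) ^ m * S w' y) • u := by
                rw [Fintype.sum_bool]
                rfl
              rw [hsum]
              refine Submodule.mem_inf.mpr ⟨Submodule.sub_mem _ hy (Submodule.add_mem _
                (Submodule.smul_mem _ _ (hF p (m - t) hp1 hw'F))
                (Submodule.smul_mem _ _ (hF p t (by omega) huF))), Submodule.mem_inf.mpr ⟨?_, ?_⟩⟩
              · show S u _ = 0
                simp only [map_sub, map_add, map_smul, smul_eq_mul, huu, huw']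
                ring
              · show S w' _ = 0
                simp only [map_sub, map_add, map_smul, smul_eq_mul, hw'u, hw'w']
                linear_combination (-(S w' y)) * hsq
            · intro i
              cases i
              · exact Or.inr (show p ≤ t by omega)
              · exact Or.inr hp1
          · by_cases hp2 : p ≤ t
            · have hβ : S u y = 0 :=
                hvan t (m + 1 - t) (by ring) u huF y (hF (m + 1 - t) p (by omega) hy)
              refine ⟨fun i => if i then 0 else (-1 : ℂ) ^ m * S w' y, ?_, ?_⟩
              · have hsum : ∑ i : Bool,
                    (fun i => if i then (0 : ℂ) else (-1 : ℂ) ^ m * S w' y) i • g i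
                    = ((-1 : ℂ) ^ m * S w' y) • u := by
                  rw [Fintype.sum_bool]
                  show (0 : ℂ) • w' + ((-1 : ℂ) ^ m * S w' y) • u = _
                  rw [zero_smul, zero_add]
                rw [hsum]
                refine Submodule.mem_inf.mpr ⟨Submodule.sub_mem _ hy
                  (Submodule.smul_mem _ _ (hF p t hp2 huF)), Submodule.mem_inf.mpr ⟨?_, ?_⟩⟩
                · show S u _ = 0
                  simp only [map_sub, map_smul, smul_eq_mul, huu, hβ]
                  ring
                · show S w' _ = 0
                  simp only [map_sub, map_smul, smul_eq_mul, hw'u]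
                  linear_combination (-(S w' y)) * hsq
              · intro i
                cases i
                · exact Or.inr hp2
                · exact Or.inl rfl
            · have hy0 : y = 0 := by
                rw [hFtop p (by omega)] at hy; simpa using hy
              exact ⟨fun _ => 0, by simp [hy0], fun i => Or.inl rfl⟩
        obtain ⟨hndl', hndr'⟩ := stmt2_restrict H F m S hndl hndr H'
          (stmt2_perpdec H F S H' Bool g dg hgperp hdec)
        obtain ⟨ι', inst', e', d', σ', he'mem, he'span, hdσ', hσσ', hmid', hp1', hp2'⟩ :=
          ih ↥H' hrk (fun p => (F p).comap H'.subtype)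
            (fun p q h => Submodule.comap_mono (hF p q h))
            ⟨a, by simp [ha]⟩
            ⟨b, by simp [hb, Submodule.comap_bot, Submodule.ker_subtype]⟩
            m (S.compl₁₂ H'.subtype H'.subtype)
            (fun u v => hsymm u v)
            (fun p q hpq u hu v hv => hvan p q hpq _ hu _ hv)
            hndl' hndr'
        refine stmt2_extend H F m S hF H' Bool g dg
          ⟨Bool.not, Bool.not, Bool.not_not, Bool.not_not⟩ ?_ ?_ ?_ ?_ ?_ ?_
          hgperp hdec ι' inst' e' d' σ' he'mem he'span hdσ' hσσ' hmid' hp1' hp2'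
        · intro i
          cases i
          · exact huF
          · exact hw'F
        · intro i
          cases i
          · show m - t = m - t; rfl
          · show t = m - (m - t); omega
        · exact Bool.not_not
        · intro i h
          cases i
          · have h' : 2 * t = m := h
            omega
          · have h' : 2 * (m - t) = m := h
            omega
        · intro i
          cases i
          · show S u w' = if m ≤ 2 * t then (1 : ℂ) else (-1 : ℂ) ^ m
            rw [if_pos (by omega)]; exact huw'
          · show S w' u = if m ≤ 2 * (m - t) then (1 : ℂ) else (-1 : ℂ) ^ m
            rw [if_neg (by omega)]; exact hw'u
        · intro i j hne
          cases i <;> cases j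
          · exact huu
          · exact absurd rfl hne
          · exact absurd rfl hne
          · exact hw'w'
      · -- case m - t = t : peel off one vector in the middle
        have hm2 : m = 2 * t := by omega
        have hm1 : (-1 : ℂ) ^ m = 1 := Even.neg_one_zpow ⟨t, by omega⟩
        have hsymm2 : ∀ u v : H, S u v = S v u := fun u v => by rw [hsymm u v, hm1, one_mul]
        -- find x ∈ F t with S x x ≠ 0
        obtain ⟨x, hxF, hxx⟩ : ∃ x ∈ F t, S x x ≠ 0 := by
          by_cases h1 : S u₀ u₀ ≠ 0
          · exact ⟨u₀, hu₀F, h1⟩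
          by_cases h2 : S w w ≠ 0
          · exact ⟨w, heqm ▸ hwF, h2⟩
          push_neg at h1 h2
          refine ⟨u₀ + w, Submodule.add_mem _ hu₀F (heqm ▸ hwF), ?_⟩
          have hexp : S (u₀ + w) (u₀ + w) = S u₀ u₀ + S u₀ w + (S w u₀ + S w w) := by
            simp only [map_add, LinearMap.add_apply]
            ring
          rw [hexp, h1, h2, hsymm2 w u₀]
          intro hc
          apply hw
          have : (2 : ℂ) * S u₀ w = 0 := by linear_combination hc
          have h2' : (2 : ℂ) ≠ 0 := by norm_num
          exact (mul_eq_zero.mp this).resolve_left h2'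
        obtain ⟨x', hx'F, hx'x'⟩ : ∃ x' ∈ F t, S x' x' = 1 := by
          obtain ⟨c, hc⟩ := IsAlgClosed.exists_pow_nat_eq (S x x) (n := 2) (by norm_num)
          have hcne : c ≠ 0 := fun h => hxx (by rw [← hc, h]; ring)
          refine ⟨c⁻¹ • x, Submodule.smul_mem _ _ hxF, ?_⟩
          simp only [map_smul, LinearMap.smul_apply, smul_eq_mul]
          rw [← hc]
          field_simp
        have hH'def : True := trivial
        let H' : Submodule ℂ H := LinearMap.ker (S x')
        have hx'H' : x' ∉ H' := fun h => by
          have : S x' x' = 0 := h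
          rw [hx'x'] at this; exact one_ne_zero this
        have hrk : finrank ℂ ↥H' < N := by
          have h1 : finrank ℂ ↥H' < finrank ℂ H :=
            Submodule.finrank_lt (fun (h : H' = ⊤) => hx'H' (h ▸ Submodule.mem_top))
          omega
        let g : Unit → H := fun _ => x'
        let dg : Unit → ℤ := fun _ => t
        have hgperp : ∀ i, ∀ y ∈ H', S (g i) y = 0 ∧ S y (g i) = 0 := by
          intro i y hy
          have h1 : S x' y = 0 := hy
          exact ⟨h1, by rw [hsymm2]; exact h1⟩
        have hdec : ∀ p : ℤ, ∀ y ∈ F p, ∃ cf : Unit → ℂ,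
            y - ∑ i, cf i • g i ∈ F p ⊓ H' ∧ ∀ i, cf i = 0 ∨ p ≤ dg i := by
          intro p y hy
          by_cases hpt : p ≤ t
          · refine ⟨fun _ => S x' y, ?_, fun i => Or.inr hpt⟩
            have hsum : ∑ i : Unit, (fun _ => S x' y) i • g i = S x' y • x' := by
              simp [g]
            rw [hsum]
            refine ⟨Submodule.sub_mem _ hy (Submodule.smul_mem _ _ (hF p t hpt hx'F)), ?_⟩
            show S x' _ = 0
            rw [map_sub, map_smul, smul_eq_mul, hx'x', mul_one, sub_self]
          · have hy0 : y = 0 := by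
              rw [hFtop p (by omega)] at hy; simpa using hy
            exact ⟨fun _ => 0, by simp [hy0], fun i => Or.inl rfl⟩
        obtain ⟨hndl', hndr'⟩ := stmt2_restrict H F m S hndl hndr H'
          (stmt2_perpdec H F S H' Unit g dg hgperp hdec)
        obtain ⟨ι', inst', e', d', σ', he'mem, he'span, hdσ', hσσ', hmid', hp1', hp2'⟩ :=
          ih ↥H' hrk (fun p => (F p).comap H'.subtype)
            (fun p q h => Submodule.comap_mono (hF p q h))
            ⟨a, by simp [ha]⟩
            ⟨b, by simp [hb, Submodule.comap_bot, Submodule.ker_subtype]⟩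
            m (S.compl₁₂ H'.subtype H'.subtype)
            (fun u v => hsymm u v)
            (fun p q hpq u hu v hv => hvan p q hpq _ hu _ hv)
            hndl' hndr'
        exact stmt2_extend H F m S hF H' Unit g dg (Equiv.refl _) (fun i => hx'F)
          (fun i => by show t = m - t; omega)
          (fun i => rfl) (fun i _ => rfl)
          (fun i => by rw [if_pos (by show m ≤ 2 * t; omega)]; exact hx'x')
          (fun i j hne => absurd rfl hne)
          hgperp hdec ι' inst' e' d' σ' he'mem he'span hdσ' hσσ' hmid' hp1' hp2'


/-- Lemma 3.4: existence of an `S`-adapted lifted basis: elements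
`v p i ∈ F^p H` whose classes form bases of the graded pieces and with
`S (v p i) (v q j) = ε_p δ_{p, m-q} δ_{i,j}`, `ε_p = ±1`. -/
theorem stmt_2 (H : Type) [AddCommGroup H] [Module ℂ H] [FiniteDimensional ℂ H]
    (F : ℤ → Submodule ℂ H) (hF : ∀ p q : ℤ, p ≤ q → F q ≤ F p)
    (hexh : ∃ a : ℤ, F a = ⊤) (hfin : ∃ b : ℤ, F b = ⊥)
    (m : ℤ) (S : H →ₗ[ℂ] H →ₗ[ℂ] ℂ)
    (hsymm : ∀ u v : H, S u v = (-1 : ℂ) ^ m * S v u)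
    (hvan : ∀ p q : ℤ, p + q = m + 1 → ∀ u ∈ F p, ∀ v ∈ F q, S u v = 0)
    (hndl : ∀ p : ℤ, ∀ u ∈ F p, (∀ v ∈ F (m - p), S u v = 0) → u ∈ F (p + 1))
    (hndr : ∀ p : ℤ, ∀ v ∈ F (m - p), (∀ u ∈ F p, S u v = 0) → v ∈ F (m - p + 1)) :
    ∃ ε : ℤ → ℂ, (∀ p, ε p = 1 ∨ ε p = -1) ∧
      ∃ v : (p : ℤ) → Fin (Module.finrank ℂ ((F p).map (F (p + 1)).mkQ)) → H,
        (∀ p i, v p i ∈ F p) ∧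
        (∀ p, LinearIndependent ℂ (fun i => (F (p + 1)).mkQ (v p i)) ∧
          Submodule.span ℂ (Set.range fun i => (F (p + 1)).mkQ (v p i)) =
            (F p).map (F (p + 1)).mkQ) ∧
        (∀ p q i j, S (v p i) (v q j) =
          if p = m - q ∧ (i : ℕ) = (j : ℕ) then ε p else 0) := by
  classical
  obtain ⟨ι, instι, e, d, σ, hmem, hspan, hdσ, hσσ, hmid, hp1, hp2⟩ :=
    stmt2_aux (finrank ℂ H + 1) H (by omega) F hF hexh hfin m S hsymm hvan hndl hndr
  set εd : ℤ → ℂ := fun p => if m ≤ 2 * p then 1 else (-1 : ℂ) ^ m with hεd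
  have hεpm : ∀ p : ℤ, εd p = 1 ∨ εd p = -1 := by
    intro p
    rw [hεd]
    by_cases h : m ≤ 2 * p
    · simp [h]
    · rcases Int.even_or_odd m with he | ho
      · simp [h, he.neg_one_zpow]
      · simp [h, ho.neg_one_zpow]
  have hεne : ∀ p : ℤ, εd p ≠ 0 := fun p => by
    rcases hεpm p with h | h <;> rw [h] <;> norm_num
  -- the pairing in the adapted family, in terms of εd
  have hpair : ∀ i j, S (e i) (e j) = if σ i = j then εd (d i) else 0 := by
    intro i j
    by_cases h : σ i = j
    · rw [if_pos h, ← h]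
      exact hp1 i
    · rw [if_neg h]
      exact hp2 i j h
  -- graded pieces
  let Ip : ℤ → Type := fun p => {i : ι // d i = p}
  let fp : (p : ℤ) → Ip p → (H ⧸ F (p + 1)) := fun p i => (F (p + 1)).mkQ (e i.1)
  have hindp : ∀ p : ℤ, LinearIndependent ℂ (fp p) := by
    intro p
    rw [Fintype.linearIndependent_iff]
    intro c hc j
    have hy : (∑ i, c i • e i.1) ∈ F (p + 1) := by
      rw [← Submodule.Quotient.mk_eq_zero]
      have : ((F (p + 1)).mkQ) (∑ i, c i • e i.1) = ∑ i, c i • fp p i := by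
        rw [map_sum]
        exact Finset.sum_congr rfl fun i _ => by rw [map_smul]
      rw [← Submodule.mkQ_apply, this, hc]
    have hj : e (σ j.1) ∈ F (m - p) := by
      have := hmem (σ j.1)
      rwa [hdσ, j.2] at this
    have h0 : S (∑ i, c i • e i.1) (e (σ j.1)) = 0 :=
      hvan (p + 1) (m - p) (by ring) _ hy _ hj
    have h1 : ∑ i, c i * S (e i.1) (e (σ j.1)) = 0 := by
      rw [← h0, map_sum, LinearMap.sum_apply]
      exact Finset.sum_congr rfl fun i _ => by
        rw [map_smul, LinearMap.smul_apply, smul_eq_mul]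
    rw [Finset.sum_eq_single j] at h1
    · rw [hpair, if_pos rfl, j.2] at h1
      exact (mul_eq_zero.mp h1).resolve_right (hεne p)
    · intro i _ hij
      rw [hpair, if_neg, mul_zero]
      intro hs
      exact hij (Subtype.ext (by rw [← hσσ i.1, hs, hσσ]))
    · intro hj'
      exact absurd (Finset.mem_univ j) hj'
  have hspanp : ∀ p : ℤ, Submodule.span ℂ (Set.range (fp p)) =
      (F p).map (F (p + 1)).mkQ := by
    intro p
    rw [hspan p, Submodule.map_span]
    apply le_antisymm
    · rw [Submodule.span_le]
      rintro x ⟨i, rfl⟩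
      exact Submodule.subset_span ⟨e i.1, ⟨i.1, le_of_eq i.2.symm, rfl⟩, rfl⟩
    · rw [Submodule.span_le]
      rintro x ⟨y, ⟨i, hi, rfl⟩, rfl⟩
      have hi' : p ≤ d i := hi
      rcases eq_or_lt_of_le hi' with heq | hlt
      · exact Submodule.subset_span ⟨⟨i, heq.symm⟩, rfl⟩
      · have : e i ∈ F (p + 1) := hF (p + 1) (d i) (by omega) (hmem i)
        have h0 : (F (p + 1)).mkQ (e i) = 0 := (Submodule.Quotient.mk_eq_zero _).mpr this
        rw [Submodule.mkQ_apply] at h0 ⊢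
        rw [h0]
        exact Submodule.zero_mem _
  have hcardp : ∀ p : ℤ, Fintype.card (Ip p) = finrank ℂ ((F p).map (F (p + 1)).mkQ) := by
    intro p
    rw [← hspanp p]
    exact (finrank_span_eq_card (hindp p)).symm
  -- the involution on graded index sets
  let σT : ∀ p q : ℤ, p + q = m → Ip p ≃ Ip q := fun p q hpq =>
    { toFun := fun i => ⟨σ i.1, by rw [hdσ, i.2]; omega⟩
      invFun := fun i => ⟨σ i.1, by rw [hdσ, i.2]; omega⟩
      left_inv := fun i => Subtype.ext (hσσ i.1)
      right_inv := fun i => Subtype.ext (hσσ i.1) }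
  let γ : ∀ p : ℤ, Fin (Fintype.card (Ip p)) ≃ Ip p := fun p => (Fintype.equivFin (Ip p)).symm
  have hcard2 : ∀ p : ℤ, finrank ℂ ((F p).map (F (p + 1)).mkQ) = Fintype.card (Ip (m - p)) := by
    intro p
    rw [← hcardp p]
    exact Fintype.card_congr (σT p (m - p) (by ring))
  let βe : ∀ p : ℤ, Fin (finrank ℂ ((F p).map (F (p + 1)).mkQ)) ≃ Ip p := fun p =>
    if h : m ≤ 2 * p then (finCongr (hcardp p).symm).trans (γ p)
    else (finCongr (hcard2 p)).trans ((γ (m - p)).trans (σT (m - p) p (by ring)))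
  have hβd : ∀ p i, d ((βe p i).1 : ι) = p := fun p i => (βe p i).2
  -- key index identity
  have key2 : ∀ p q : ℤ, p + q = m → ∀ i j,
      (σ ((βe p i).1 : ι) = ((βe q j).1 : ι)) ↔ (i : ℕ) = (j : ℕ):= by
    intro p q hpq i j
    by_cases hmq : 2 * p = m
    · -- middle case : q = p, σ fixes everything
      obtain rfl : q = p := by omega
      have h : m ≤ 2 * q := by omega
      have hfix : ∀ k, σ ((βe q k).1 : ι) = ((βe q k).1 : ι) := fun k =>
        hmid _ (by rw [hβd]; omega)
      rw [hfix i]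
      simp only [βe, dif_pos h]
      constructor
      · intro hval
        have := (γ q).injective (Subtype.coe_injective hval)
        simpa [Fin.ext_iff] using this
      · intro hval
        have h5 : (Fin.cast (hcardp q).symm i) = (Fin.cast (hcardp q).symm j) := by
          simpa [Fin.ext_iff] using hval
        show ((γ q (Fin.cast (hcardp q).symm i)).1 : ι) = ((γ q (Fin.cast (hcardp q).symm j)).1 : ι)
        rw [h5]
    · by_cases h : m ≤ 2 * p
      · -- q is the low side
        obtain rfl : p = m - q := by omega
        have h' : ¬ m ≤ 2 * q := by omega
        simp only [βe, dif_pos h, dif_neg h']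
        constructor
        · intro hval
          have hval' : σ ((γ (m - q) (Fin.cast (hcardp (m - q)).symm i)).1 : ι)
              = σ ((γ (m - q) (Fin.cast (hcard2 q) j)).1 : ι) := hval
          have h4 := (γ (m - q)).injective (Subtype.coe_injective (σ.injective hval'))
          simpa [Fin.ext_iff] using h4
        · intro hval
          have h3 : (Fin.cast (hcardp (m - q)).symm i) = (Fin.cast (hcard2 q) j) :=
            Fin.ext (by simpa using hval)
          show σ ((γ (m - q) (Fin.cast (hcardp (m - q)).symm i)).1 : ι)
              = σ ((γ (m - q) (Fin.cast (hcard2 q) j)).1 : ι)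
          rw [h3]
      · -- p is the low side
        have h' : m ≤ 2 * q := by omega
        obtain rfl : q = m - p := by omega
        simp only [βe, dif_neg h, dif_pos h']
        constructor
        · intro hval
          have hval' : σ (σ ((γ (m - p) (Fin.cast (hcard2 p) i)).1 : ι))
              = ((γ (m - p) (Fin.cast (hcardp (m - p)).symm j)).1 : ι) := hval
          rw [hσσ] at hval'
          have h4 := (γ (m - p)).injective (Subtype.coe_injective hval')
          simpa [Fin.ext_iff] using h4
        · intro hval
          have h3 : (Fin.cast (hcard2 p) i) = (Fin.cast (hcardp (m - p)).symm j) :=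
            Fin.ext (by simpa using hval)
          show σ (σ ((γ (m - p) (Fin.cast (hcard2 p) i)).1 : ι))
              = ((γ (m - p) (Fin.cast (hcardp (m - p)).symm j)).1 : ι)
          rw [hσσ, h3]
  have key3 : ∀ p q : ℤ, p + q ≠ m → ∀ i j,
      σ ((βe p i).1 : ι) ≠ ((βe q j).1 : ι) := by
    intro p q hpq i j hc
    have h1 : d (σ ((βe p i).1 : ι)) = m - p := by rw [hdσ, hβd]
    rw [hc, hβd] at h1
    omega
  refine ⟨εd, hεpm, fun p i => e ((βe p i).1 : ι), ?_, ?_, ?_⟩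
  · intro p i
    have := hmem ((βe p i).1 : ι)
    rwa [hβd] at this
  · intro p
    constructor
    · exact (hindp p).comp (βe p) (βe p).injective
    · have hr : (Set.range fun i => (F (p + 1)).mkQ (e ((βe p i).1 : ι)))
          = Set.range (fp p) := by
        have : (fun i => (F (p + 1)).mkQ (e ((βe p i).1 : ι))) = fp p ∘ (βe p) := rfl
        rw [this, Set.range_comp, Equiv.range_eq_univ, Set.image_univ]
      rw [hr, hspanp p]
  · intro p q i j
    by_cases hpq : p + q = m
    · rw [hpair, hβd]
      by_cases hs : σ ((βe p i).1 : ι) = ((βe q j).1 : ι)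
      · rw [if_pos hs, if_pos ⟨by omega, (key2 p q hpq i j).mp hs⟩]
      · rw [if_neg hs, if_neg]
        rintro ⟨-, hij⟩
        exact hs ((key2 p q hpq i j).mpr hij)
    · rw [hpair, if_neg (key3 p q hpq i j), if_neg]
      rintro ⟨h1, -⟩
      omega
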